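/- Let D ≥ 2 and m ≥ 1 be integers and r ≥ 1. Define q̂(X) = (Σ_{i=1}^r X_i^{D-m}) / (Σ_{i=1}^r X_i^{D-1}) on the standard simplex Δ^{r-1} = {X ∈ ℝ^r : Σ X_i = 1, X_i ≥ 0} (restricted to points where the denominator is nonzero, i.e. X ≠ 0, which always holds on the simplex). If 1 ≤ m ≤ D-1, then the supremum of q̂ over Δ^{r-1} equals r^{m-1}, attained at the barycenter X = (1/r, …, 1/r). -/

import Mathlib

open Finset

lemma cheb_step (r a : ℕ) (X : Fin r → ℝ) (hX : ∀ i, 0 ≤ X i) (hs : ∑ i, X i = 1) :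
    ∑ i, X i ^ a ≤ (r : ℝ) * ∑ i, X i ^ (a + 1) := by
  have hmono : Monovary (fun i => X i ^ a) X := by
    intro i j hij
    exact pow_le_pow_left₀ (hX i) hij.le a
  have := hmono.sum_mul_sum_le_card_mul_sum
  simpa [hs, pow_succ, mul_comm] using this

lemma key_ineq (r a c : ℕ) (X : Fin r → ℝ) (hX : ∀ i, 0 ≤ X i) (hs : ∑ i, X i = 1) :
    ∑ i, X i ^ a ≤ (r : ℝ) ^ c * ∑ i, X i ^ (a + c) := by
  induction c with
  | zero => simp
  | succ n ih =>
    have h1 : ∑ i, X i ^ (a + n) ≤ (r : ℝ) * ∑ i, X i ^ (a + n + 1) :=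
      cheb_step r (a + n) X hX hs
    have hr0 : (0 : ℝ) ≤ (r : ℝ) ^ n := by positivity
    calc ∑ i, X i ^ a ≤ (r : ℝ) ^ n * ∑ i, X i ^ (a + n) := ih
      _ ≤ (r : ℝ) ^ n * ((r : ℝ) * ∑ i, X i ^ (a + n + 1)) := by
          exact mul_le_mul_of_nonneg_left h1 hr0
      _ = (r : ℝ) ^ (n + 1) * ∑ i, X i ^ (a + (n + 1)) := by
          rw [show a + (n + 1) = a + n + 1 from by omega]; ring

/-- For integers `D ≥ 2`, `1 ≤ m ≤ D-1`, `r ≥ 1`, the function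
`q̂(X) = (Σ X_i^{D-m}) / (Σ X_i^{D-1})` attains its supremum `r^{m-1}` over
the standard simplex, at the barycenter `X = (1/r,…,1/r)`. -/
theorem simplex_sup_ratio (D m r : ℕ) (hD : 2 ≤ D) (hm : 1 ≤ m) (hmD : m ≤ D - 1)
    (hr : 1 ≤ r) :
    IsGreatest
      {y : ℝ | ∃ X : Fin r → ℝ, (∀ i, 0 ≤ X i) ∧ (∑ i, X i = 1) ∧
        y = (∑ i, X i ^ (D - m)) / (∑ i, X i ^ (D - 1))}
      ((r : ℝ) ^ (m - 1)) ∧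
    (∑ i : Fin r, ((r : ℝ)⁻¹) ^ (D - m)) / (∑ i : Fin r, ((r : ℝ)⁻¹) ^ (D - 1))
      = (r : ℝ) ^ (m - 1) := by
  have hrR : (0 : ℝ) < r := by exact_mod_cast hr
  have hsplit : D - m + (m - 1) = D - 1 := by omega
  have hbary : (∑ i : Fin r, ((r : ℝ)⁻¹) ^ (D - m)) / (∑ i : Fin r, ((r : ℝ)⁻¹) ^ (D - 1))
      = (r : ℝ) ^ (m - 1) := by
    simp only [Finset.sum_const, Finset.card_univ, Fintype.card_fin, nsmul_eq_mul,
      ← hsplit, pow_add]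
    have h1 : ((r : ℝ)⁻¹) ^ (D - m) ≠ 0 := by positivity
    have h2 : ((r : ℝ)⁻¹) ^ (m - 1) ≠ 0 := by positivity
    field_simp
    ring_nf
    rw [← mul_pow, mul_inv_cancel₀ hrR.ne', one_pow]
  refine ⟨⟨⟨fun _ => (r : ℝ)⁻¹, fun i => by positivity, by
      simp [Finset.sum_const, mul_inv_cancel₀ hrR.ne'], hbary.symm⟩, ?_⟩, hbary⟩
  rintro y ⟨X, hX, hs, rfl⟩
  -- denominator positive
  have hex : ∃ i, 0 < X i := by
    by_contra h
    push_neg at h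
    have : ∑ i, X i = 0 := Finset.sum_eq_zero fun i _ => le_antisymm (h i) (hX i)
    rw [hs] at this; norm_num at this
  obtain ⟨i0, hi0⟩ := hex
  have hden : 0 < ∑ i, X i ^ (D - 1) := by
    apply Finset.sum_pos' (fun i _ => pow_nonneg (hX i) _)
    exact ⟨i0, Finset.mem_univ i0, pow_pos hi0 _⟩
  rw [div_le_iff₀ hden]
  calc ∑ i, X i ^ (D - m) ≤ (r : ℝ) ^ (m - 1) * ∑ i, X i ^ (D - m + (m - 1)) :=
        key_ineq r (D - m) (m - 1) X hX hs
    _ = (r : ℝ) ^ (m - 1) * ∑ i, X i ^ (D - 1) := by rw [hsplit]
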